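/- arXiv:2301.03764 — 3 statements merged into one kernel-verified Lean document; each statement's English description precedes it below -/
import Mathlib

section
/- Let Np ≥ 1 and R_G, R_F ∈ ℂ, and let E = I − M_G⁻¹M_F be the (Np+1)×(Np+1) Parareal error matrix, where M_G and M_F are the unit lower bidiagonal matrices with ones on the diagonal and −R_G (respectively −R_F) on the first subdiagonal. Then the ∞-norm of E (the maximum over rows of the sum of the absolute values of the entries) equals |R_G − R_F| · Σ_{j=0}^{Np−1} |R_G|^j; in particular, if |R_G| ≠ 1 then ‖E‖_∞ = ((1 − |R_G|^{Np})/(1 − |R_G|)) · |R_G − R_F|, and if |R_G| = 1 then ‖E‖_∞ = Np · |R_G − R_F|. -/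
/-- The `(N+1)×(N+1)` unit lower bidiagonal matrix with ones on the diagonal and `-R` on
the first subdiagonal. -/
noncomputable def pararealBidiag (N : ℕ) (R : ℂ) : Matrix (Fin (N + 1)) (Fin (N + 1)) ℂ :=
  Matrix.of fun i j => if i = j then 1 else if (i : ℕ) = (j : ℕ) + 1 then -R else 0

/-- The ∞-norm of a matrix: the maximum over rows of the sum of the absolute values of
the entries. -/
noncomputable def rowSumNorm {N : ℕ} (A : Matrix (Fin (N + 1)) (Fin (N + 1)) ℂ) : ℝ :=
  Finset.univ.sup' Finset.univ_nonempty fun i => ∑ j, ‖A i j‖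

noncomputable def pbInv (N : ℕ) (R : ℂ) : Matrix (Fin (N + 1)) (Fin (N + 1)) ℂ :=
  Matrix.of fun i j => if (j : ℕ) ≤ (i : ℕ) then R ^ ((i : ℕ) - (j : ℕ)) else 0

lemma pb_mul_inv (N : ℕ) (R : ℂ) : pararealBidiag N R * pbInv N R = 1 := by
  ext i j
  rw [Matrix.mul_apply]
  simp only [pararealBidiag, pbInv, Matrix.of_apply, ite_mul, one_mul, zero_mul, neg_mul]
  rcases i with ⟨iv, hi⟩
  rcases j with ⟨jv, hj⟩
  match iv with
  | 0 =>
    rw [Finset.sum_eq_single (⟨0, hi⟩ : Fin (N+1))]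
    · rw [if_pos rfl, Matrix.one_apply]
      simp only [Fin.ext_iff]
      by_cases hjv : (0 : ℕ) = jv
      · subst hjv; simp
      · rw [if_neg hjv, if_neg (by simp only [Fin.val_mk]; omega : ¬ (jv ≤ (((⟨0,hi⟩ : Fin (N+1)) : ℕ))))]
    · intro k _ hk
      have e1 : ¬ ((⟨0, hi⟩ : Fin (N+1)) = k) := fun h => hk h.symm
      have e2 : ¬ ((((⟨0,hi⟩ : Fin (N+1)) : ℕ)) = (k:ℕ) + 1) := by simp
      rw [if_neg e1, if_neg e2]
    · simp
  | m + 1 =>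
    have hm : m < N + 1 := Nat.lt_of_succ_lt hi
    rw [Finset.sum_eq_add_of_mem (⟨m+1, hi⟩ : Fin (N+1)) (⟨m, hm⟩ : Fin (N+1))
      (Finset.mem_univ _) (Finset.mem_univ _) (by simp [Fin.ext_iff])
      (by
        intro k _ hk
        have e1 : ¬ ((⟨m+1, hi⟩ : Fin (N+1)) = k) := fun h => hk.1 h.symm
        have e2 : ¬ ((((⟨m+1,hi⟩ : Fin (N+1)) : ℕ)) = (k:ℕ) + 1) := by
          intro h
          exact hk.2 (Fin.ext (Nat.succ_injective h).symm)
        rw [if_neg e1, if_neg e2])]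
    have hne : ¬ ((⟨m+1, hi⟩ : Fin (N+1)) = ⟨m, hm⟩) := by simp [Fin.ext_iff]
    rw [if_pos rfl, if_neg hne, if_pos (rfl : (((⟨m+1,hi⟩ : Fin (N+1)):ℕ)) = (((⟨m,hm⟩ : Fin (N+1)):ℕ)) + 1)]
    rw [Matrix.one_apply]
    simp only [Fin.ext_iff]
    show (if jv ≤ m + 1 then R ^ (m + 1 - jv) else 0) +
        -(R * if jv ≤ m then R ^ (m - jv) else 0) =
        if (m + 1 : ℕ) = jv then 1 else 0
    by_cases hle : jv ≤ m
    · rw [if_pos (Nat.le_succ_of_le hle), if_pos hle, if_neg (by omega : ¬ ((m+1:ℕ) = jv))]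
      have h2 : m + 1 - jv = (m - jv) + 1 := by omega
      rw [h2, pow_succ]
      ring
    · by_cases heq : jv = m + 1
      · subst heq
        rw [if_pos le_rfl, if_neg hle, if_pos rfl]
        simp
      · rw [if_neg (by omega : ¬ (jv ≤ m + 1)), if_neg hle, if_neg (by omega : ¬ ((m+1:ℕ) = jv))]
        ring

lemma pb_inv_eq (N : ℕ) (R : ℂ) : (pararealBidiag N R)⁻¹ = pbInv N R :=
  Matrix.inv_eq_right_inv (pb_mul_inv N R)

lemma E_apply (N : ℕ) (RG RF : ℂ) (i j : Fin (N + 1)) :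
    (1 - pbInv N RG * pararealBidiag N RF) i j =
      if (j : ℕ) + 1 ≤ (i : ℕ) then (RF - RG) * RG ^ ((i : ℕ) - (j : ℕ) - 1) else 0 := by
  rw [Matrix.sub_apply, Matrix.mul_apply]
  simp only [pararealBidiag, pbInv, Matrix.of_apply, mul_ite, mul_one, mul_neg, mul_zero]
  rcases i with ⟨iv, hi⟩
  rcases j with ⟨jv, hj⟩
  by_cases hjN : jv < N
  · have hj1 : jv + 1 < N + 1 := by omega
    rw [Finset.sum_eq_add_of_mem (⟨jv, hj⟩ : Fin (N+1)) (⟨jv+1, hj1⟩ : Fin (N+1))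
      (Finset.mem_univ _) (Finset.mem_univ _) (by simp [Fin.ext_iff])
      (by
        intro k _ hk
        have e1 : ¬ (k = (⟨jv, hj⟩ : Fin (N+1))) := hk.1
        have e2 : ¬ ((k : ℕ) = jv + 1) := by
          intro h; exact hk.2 (Fin.ext h)
        rw [if_neg e1, if_neg (by simpa using e2)])]
    have hne : ¬ ((⟨jv+1, hj1⟩ : Fin (N+1)) = ⟨jv, hj⟩) := by simp
    rw [if_pos rfl, if_neg hne, if_pos (by simp : (((⟨jv+1,hj1⟩ : Fin (N+1)):ℕ)) = (((⟨jv,hj⟩ : Fin (N+1)):ℕ)) + 1)]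
    rw [Matrix.one_apply]
    simp only [Fin.ext_iff, Fin.val_mk]
    by_cases h1 : jv + 1 ≤ iv
    · rw [if_neg (by omega : ¬ (iv = jv)), if_pos (by omega : jv ≤ iv), if_pos h1, if_pos h1]
      have h3 : iv - (jv + 1) = iv - jv - 1 := by omega
      rw [h3]
      generalize hgen : iv - jv - 1 = m
      have h2 : iv - jv = m + 1 := by omega
      rw [h2, pow_succ]
      ring
    · rw [if_neg h1, if_neg h1]
      by_cases h2 : iv = jv
      · subst h2; simp
      · rw [if_neg h2, if_neg (by omega : ¬ (jv ≤ iv))]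
        ring
  · have hjv : jv = N := by omega
    rw [Finset.sum_eq_single (⟨jv, hj⟩ : Fin (N+1))]
    · rw [if_pos rfl, Matrix.one_apply]
      simp only [Fin.ext_iff, Fin.val_mk]
      by_cases h2 : iv = jv
      · subst h2; simp [le_refl]
      · have h1 : ¬ (jv + 1 ≤ iv) := by omega
        rw [if_neg h2, if_neg (by omega : ¬ (jv ≤ iv)), if_neg h1]
        ring
    · intro k _ hk
      have e2 : ¬ ((k : ℕ) = jv + 1) := by
        rcases k with ⟨kv, hk'⟩; simp only [Fin.val_mk]; omega
      rw [if_neg hk, if_neg (by simpa using e2)]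
    · simp

lemma row_sum (N : ℕ) (RG RF : ℂ) (i : Fin (N + 1)) :
    ∑ j, ‖(1 - pbInv N RG * pararealBidiag N RF) i j‖ =
      ‖RG - RF‖ * ∑ m ∈ Finset.range (i : ℕ), ‖RG‖ ^ m := by
  have key : ∀ j : Fin (N + 1), ‖(1 - pbInv N RG * pararealBidiag N RF) i j‖ =
      (if (j : ℕ) + 1 ≤ (i : ℕ) then ‖RG - RF‖ * ‖RG‖ ^ ((i : ℕ) - (j : ℕ) - 1) else 0) := by
    intro j
    rw [E_apply, apply_ite norm, norm_mul, norm_pow, norm_zero,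
      norm_sub_rev RF RG]
  simp only [key]
  rw [Fin.sum_univ_eq_sum_range
    (fun jv => if jv + 1 ≤ (i : ℕ) then ‖RG - RF‖ * ‖RG‖ ^ ((i : ℕ) - jv - 1) else 0)]
  rw [← Finset.sum_subset (Finset.range_subset_range.mpr (by omega : (i : ℕ) ≤ N + 1))
    (fun x _ hx => if_neg (by simp only [Finset.mem_range, not_lt] at hx; omega))]
  rw [Finset.sum_congr rfl (fun x hx => if_pos (by simp only [Finset.mem_range] at hx; omega))]
  rw [Finset.sum_congr rfl (fun x hx => by
    rw [show (i : ℕ) - x - 1 = (i : ℕ) - 1 - x from by omega] :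
    ∀ x ∈ Finset.range (i : ℕ), ‖RG - RF‖ * ‖RG‖ ^ ((i : ℕ) - x - 1) =
      ‖RG - RF‖ * ‖RG‖ ^ ((i : ℕ) - 1 - x))]
  rw [Finset.sum_range_reflect (fun m => ‖RG - RF‖ * ‖RG‖ ^ m) (i : ℕ)]
  rw [Finset.mul_sum]

theorem parareal_error_matrix_inf_norm (Np : ℕ) (hNp : 1 ≤ Np) (RG RF : ℂ)
    (MG MF : Matrix (Fin (Np + 1)) (Fin (Np + 1)) ℂ)
    (hMG : MG = pararealBidiag Np RG) (hMF : MF = pararealBidiag Np RF)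
    (E : Matrix (Fin (Np + 1)) (Fin (Np + 1)) ℂ) (hE : E = 1 - MG⁻¹ * MF) :
    rowSumNorm E = ‖RG - RF‖ * ∑ j ∈ Finset.range Np, ‖RG‖ ^ j ∧
    (‖RG‖ ≠ 1 →
      rowSumNorm E =
        (1 - ‖RG‖ ^ Np) / (1 - ‖RG‖) * ‖RG - RF‖) ∧
    (‖RG‖ = 1 → rowSumNorm E = Np * ‖RG - RF‖) := by
  have hE' : E = 1 - pbInv Np RG * pararealBidiag Np RF := by
    rw [hE, hMG, hMF, pb_inv_eq]
  subst hE'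
  set c := ‖RG - RF‖ with hc
  set a := ‖RG‖ with ha
  have hc0 : 0 ≤ c := norm_nonneg _
  have ha0 : 0 ≤ a := norm_nonneg _
  have hmain : rowSumNorm (1 - pbInv Np RG * pararealBidiag Np RF) =
      c * ∑ j ∈ Finset.range Np, a ^ j := by
    unfold rowSumNorm
    apply le_antisymm
    · apply Finset.sup'_le
      intro i _
      rw [row_sum]
      apply mul_le_mul_of_nonneg_left _ hc0
      apply Finset.sum_le_sum_of_subset_of_nonneg
      · exact Finset.range_subset_range.mpr (by omega : (i : ℕ) ≤ Np)
      · intro j _ _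
        positivity
    · have := Finset.le_sup' (fun i : Fin (Np + 1) =>
        ∑ j, ‖(1 - pbInv Np RG * pararealBidiag Np RF) i j‖)
        (Finset.mem_univ (Fin.last Np))
      rw [row_sum] at this
      exact this
  refine ⟨hmain, fun hne => ?_, fun heq => ?_⟩
  · rw [hmain, geom_sum_eq (fun h => hne (by rwa [ha])) Np]
    rw [div_mul_eq_mul_div, mul_comm, ← div_mul_eq_mul_div]
    congr 1
    rw [← neg_div_neg_eq, neg_sub, neg_sub]
  · rw [hmain, ha] at *
    rw [heq]
    simp [mul_comm]
end

section
/- Let Np ≥ 1 and R_G, R_F ∈ ℂ, and let E = I − M_G⁻¹M_F be the (Np+1)×(Np+1) Parareal error matrix, where M_G and M_F are the unit lower bidiagonal matrices with ones on the diagonal and −R_G (respectively −R_F) on the first subdiagonal. Then ‖E‖_∞ ≤ Np · max(1, |R_G|)^{Np−1} · |R_G − R_F|, where ‖E‖_∞ is the maximum absolute row sum of E. -/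
/-- The explicit inverse of `pararealBidiag N R`. -/
noncomputable def pararealBidiagInv (N : ℕ) (R : ℂ) :
    Matrix (Fin (N + 1)) (Fin (N + 1)) ℂ :=
  Matrix.of fun i j => if (j : ℕ) ≤ (i : ℕ) then R ^ ((i : ℕ) - (j : ℕ)) else 0

lemma sum_ite_val_eq {n : ℕ} (f : Fin (n + 1) → ℂ) (m : ℕ) :
    (∑ k : Fin (n + 1), if (k : ℕ) = m then f k else 0)
      = if h : m < n + 1 then f ⟨m, h⟩ else 0 := by
  split_ifs with h
  · rw [Finset.sum_congr rfl (g := fun k => if k = ⟨m, h⟩ then f k else 0)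
      (fun k _ => by simp [Fin.ext_iff])]
    simp
  · refine Finset.sum_eq_zero fun k _ => ?_
    have : (k : ℕ) ≠ m := by omega
    simp [this]

lemma pararealBidiag_mul_inv (N : ℕ) (R : ℂ) :
    pararealBidiag N R * pararealBidiagInv N R = 1 := by
  ext i j
  rw [Matrix.mul_apply]
  rcases Nat.eq_zero_or_eq_succ_pred (i : ℕ) with h0 | hs
  · have : (∑ k : Fin (N + 1), pararealBidiag N R i k * pararealBidiagInv N R k j)
        = ∑ k : Fin (N + 1), if k = i then pararealBidiagInv N R k j else 0 := by
      refine Finset.sum_congr rfl fun k _ => ?_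
      simp only [pararealBidiag, Matrix.of_apply]
      split_ifs with h1 h2 h3 <;> first
        | (exfalso; omega) | (subst_vars; simp_all) | ring
    rw [this, Finset.sum_ite_eq' Finset.univ i]
    simp only [Finset.mem_univ, if_true, pararealBidiagInv, Matrix.of_apply,
      Matrix.one_apply]
    by_cases hij : i = j
    · subst hij
      simp
    · have : ¬ (j : ℕ) ≤ (i : ℕ) ∨ (j : ℕ) = (i : ℕ) := by omega
      rcases this with h | h
      · simp [h, hij]
      · exact absurd (Fin.ext h.symm) hij
  · set m := (i : ℕ) - 1 with hm
    have him : (i : ℕ) = m + 1 := by omega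
    have hmlt : m < N + 1 := by omega
    have split : (∑ k : Fin (N + 1), pararealBidiag N R i k * pararealBidiagInv N R k j)
        = (∑ k : Fin (N + 1), if k = i then pararealBidiagInv N R k j else 0)
          + ∑ k : Fin (N + 1), if (k : ℕ) = m then -R * pararealBidiagInv N R k j else 0 := by
      rw [← Finset.sum_add_distrib]
      refine Finset.sum_congr rfl fun k _ => ?_
      simp only [pararealBidiag, Matrix.of_apply]
      by_cases h1 : i = k
      · have : ¬ (k : ℕ) = m := by rw [← h1]; omega
        simp [h1, this]
      · have h1' : ¬ k = i := fun h => h1 h.symm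
        by_cases h2 : (i : ℕ) = (k : ℕ) + 1
        · have : (k : ℕ) = m := by omega
          simp [h1, h1', this, h2]
        · have : ¬ (k : ℕ) = m := by
            intro h; exact h2 (by omega)
          simp [h1, h1', this, h2]
    rw [split, Finset.sum_ite_eq' Finset.univ i, sum_ite_val_eq, dif_pos hmlt]
    simp only [Finset.mem_univ, if_true, pararealBidiagInv, Matrix.of_apply,
      Matrix.one_apply]
    rcases lt_trichotomy (j : ℕ) (i : ℕ) with hlt | heq | hgt
    · have h1 : (j : ℕ) ≤ (i : ℕ) := le_of_lt hlt
      have h2 : (j : ℕ) ≤ m := by omega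
      have hij : ¬ i = j := by intro h; omega
      have hpow : (i : ℕ) - (j : ℕ) = (m - (j : ℕ)) + 1 := by omega
      simp only [h1, if_true, h2, hij, if_false, hpow, pow_succ]
      ring
    · have hij : i = j := Fin.ext heq.symm
      subst hij
      have h2 : ¬ (i : ℕ) ≤ m := by omega
      simp [h2]
    · have h1 : ¬ (j : ℕ) ≤ (i : ℕ) := by omega
      have h2 : ¬ (j : ℕ) ≤ m := by omega
      have hij : ¬ i = j := by intro h; omega
      simp [h1, h2, hij]

lemma parareal_error_entry (Np : ℕ) (RG RF : ℂ) (i j : Fin (Np + 1)) :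
    (1 - (pararealBidiag Np RG)⁻¹ * pararealBidiag Np RF) i j
      = if (j : ℕ) < (i : ℕ) then (RF - RG) * RG ^ ((i : ℕ) - (j : ℕ) - 1) else 0 := by
  have hinv : (pararealBidiag Np RG)⁻¹ = pararealBidiagInv Np RG :=
    Matrix.inv_eq_right_inv (pararealBidiag_mul_inv Np RG)
  rw [Matrix.sub_apply, hinv, Matrix.mul_apply]
  set B := pararealBidiagInv Np RG with hB
  have split : (∑ k : Fin (Np + 1), B i k * pararealBidiag Np RF k j)
      = (∑ k : Fin (Np + 1), if k = j then B i k else 0)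
        + ∑ k : Fin (Np + 1), if (k : ℕ) = (j : ℕ) + 1 then B i k * (-RF) else 0 := by
    rw [← Finset.sum_add_distrib]
    refine Finset.sum_congr rfl fun k _ => ?_
    simp only [pararealBidiag, Matrix.of_apply]
    by_cases h1 : k = j
    · have : ¬ (k : ℕ) = (j : ℕ) + 1 := by rw [h1]; omega
      simp [h1, this]
    · by_cases h2 : (k : ℕ) = (j : ℕ) + 1
      · simp [h1, h2]
      · simp [h1, h2]
  have hBzero : ∀ (a b : Fin (Np + 1)), (a : ℕ) < (b : ℕ) → B a b = 0 := fun a b h => by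
    simp only [hB, pararealBidiagInv, Matrix.of_apply]
    exact if_neg (Nat.not_le.mpr h)
  rw [split, Finset.sum_ite_eq' Finset.univ j, sum_ite_val_eq]
  simp only [Finset.mem_univ, if_true]
  rcases lt_trichotomy (j : ℕ) (i : ℕ) with hlt | heq | hgt
  · have hij : ¬ i = j := by intro h; omega
    have hj1 : (j : ℕ) + 1 < Np + 1 := by omega
    have h1 : (j : ℕ) ≤ (i : ℕ) := le_of_lt hlt
    simp only [Matrix.one_apply, hij, if_false, hB, pararealBidiagInv, Matrix.of_apply,
      h1, if_true, dif_pos hj1, hlt, if_true]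
    have hle : ((j : ℕ) + 1) ≤ (i : ℕ) := by omega
    simp only [hle, if_true]
    have hpow2 : (i : ℕ) - ((j : ℕ) + 1) = (i : ℕ) - (j : ℕ) - 1 := by omega
    have key : RG ^ ((i : ℕ) - (j : ℕ)) = RG * RG ^ ((i : ℕ) - (j : ℕ) - 1) := by
      conv_lhs => rw [show (i : ℕ) - (j : ℕ) = ((i : ℕ) - (j : ℕ) - 1) + 1 from by omega]
      rw [pow_succ]; ring
    rw [hpow2, key]
    ring
  · have hij : i = j := Fin.ext heq.symm
    subst hij
    have hd : (if h : (i : ℕ) + 1 < Np + 1 then B i ⟨(i : ℕ) + 1, h⟩ * -RF else 0) = 0 := by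
      split_ifs with h
      · rw [hBzero i ⟨(i : ℕ) + 1, h⟩ (Nat.lt_succ_self _), zero_mul]
      · rfl
    have hBii : B i i = 1 := by simp [hB, pararealBidiagInv]
    rw [hd, add_zero, Matrix.one_apply_eq, if_neg (lt_irrefl _), hBii]
    ring
  · have hij : ¬ i = j := by intro h; omega
    have hcond : ¬ (j : ℕ) < (i : ℕ) := by omega
    have hd : (if h : (j : ℕ) + 1 < Np + 1 then B i ⟨(j : ℕ) + 1, h⟩ * -RF else 0) = 0 := by
      split_ifs with h
      · rw [hBzero i ⟨(j : ℕ) + 1, h⟩ (show (i : ℕ) < (j : ℕ) + 1 by omega), zero_mul]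
      · rfl
    rw [hd, add_zero, Matrix.one_apply_ne (fun hh => hij hh), hBzero i j hgt, if_neg hcond]
    ring

theorem parareal_error_matrix_inf_norm_bound (Np : ℕ) (hNp : 1 ≤ Np) (RG RF : ℂ)
    (MG MF : Matrix (Fin (Np + 1)) (Fin (Np + 1)) ℂ)
    (hMG : MG = pararealBidiag Np RG) (hMF : MF = pararealBidiag Np RF)
    (E : Matrix (Fin (Np + 1)) (Fin (Np + 1)) ℂ) (hE : E = 1 - MG⁻¹ * MF) :
    rowSumNorm E ≤
      Np * max 1 ‖RG‖ ^ (Np - 1) * ‖RG - RF‖ := by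
  subst hMG hMF hE
  set M := max 1 ‖RG‖ with hM
  have hM1 : (1 : ℝ) ≤ M := le_max_left _ _
  set C : ℝ := M ^ (Np - 1) * ‖RG - RF‖ with hC
  have hCnn : 0 ≤ C := mul_nonneg (pow_nonneg (le_trans zero_le_one hM1) _)
    (norm_nonneg _)
  rw [rowSumNorm]
  refine Finset.sup'_le _ _ fun i _ => ?_
  have hrow : ∀ j : Fin (Np + 1),
      ‖(1 - (pararealBidiag Np RG)⁻¹ * pararealBidiag Np RF) i j‖
        ≤ if (j : ℕ) < (i : ℕ) then C else 0 := by
    intro j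
    rw [parareal_error_entry]
    split_ifs with h
    · rw [norm_mul, norm_pow, norm_sub_rev, hC,
        mul_comm (M ^ (Np - 1)) (‖RG - RF‖)]
      have hpow : ‖RG‖ ^ ((i : ℕ) - (j : ℕ) - 1) ≤ M ^ (Np - 1) :=
        (pow_le_pow_left₀ (norm_nonneg _) (le_max_right 1 _) _).trans
          (pow_le_pow_right₀ hM1 (by omega))
      exact mul_le_mul_of_nonneg_left hpow (norm_nonneg _)
    · simp
  calc (∑ j, ‖(1 - (pararealBidiag Np RG)⁻¹ * pararealBidiag Np RF) i j‖)
      ≤ ∑ j : Fin (Np + 1), if (j : ℕ) < (i : ℕ) then C else 0 :=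
        Finset.sum_le_sum fun j _ => hrow j
    _ = ∑ j : Fin (Np + 1), if j < i then C else 0 := by
        refine Finset.sum_congr rfl fun j _ => ?_
        simp only [Fin.lt_def]
    _ = (Finset.univ.filter (fun j : Fin (Np + 1) => j < i)).card • C := by
        rw [← Finset.sum_filter, Finset.sum_const]
    _ = (Finset.Iio i).card • C := by
        have : Finset.univ.filter (fun j : Fin (Np + 1) => j < i) = Finset.Iio i := by
          ext x; simp
        rw [this]
    _ = (i : ℕ) • C := by rw [Fin.card_Iio]
    _ = (i : ℕ) * C := nsmul_eq_mul _ _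
    _ ≤ Np * C := by
        refine mul_le_mul_of_nonneg_right ?_ hCnn
        exact_mod_cast Nat.le_of_lt_succ i.isLt
    _ = Np * M ^ (Np - 1) * ‖RG - RF‖ := by rw [hC]; ring
end

section
/- Let Np ≥ 1, Ng ≥ 1, q ≥ 1, C₁, C₂ ≥ 0, and r₁, r₂ ≥ 0, and set θ = (r₁ + r₂)/Ng. Let R_G, R_F ∈ ℂ satisfy |R_G| ≤ 1 + C₁·θ^q and |R_G − R_F| ≤ C₂·θ^q, and let E = I − M_G⁻¹M_F be the (Np+1)×(Np+1) Parareal error matrix built from R_G and R_F (M_G, M_F unit lower bidiagonal with −R_G, −R_F on the first subdiagonal). Then ‖E‖_∞ ≤ Np · C₂ · θ^q · (1 + C₁·θ^q)^{Np−1}. In particular, if Np · C₂ · θ^q · (1 + C₁·θ^q)^{Np−1} < 1 then ‖E‖_∞ < 1 and the Parareal error decreases monotonically, so for fixed (r₁, r₂) the bound on ‖E‖_∞ scales like O(1/Ng^q) and the guaranteed convergence region grows with Ng. -/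
/-- Explicit form of the Parareal error matrix. -/
noncomputable def pErr (N : ℕ) (RG RF : ℂ) : Matrix (Fin (N + 1)) (Fin (N + 1)) ℂ :=
  Matrix.of fun i j =>
    if (j : ℕ) < (i : ℕ) then -(RG - RF) * RG ^ ((i : ℕ) - (j : ℕ) - 1) else 0

lemma pararealBidiag_det (N : ℕ) (R : ℂ) : (pararealBidiag N R).det = 1 := by
  have h : (pararealBidiag N R).BlockTriangular ⇑OrderDual.toDual := by
    intro i j hij
    simp only [OrderDual.toDual_lt_toDual] at hij
    have h1 : i ≠ j := ne_of_lt hij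
    have h2 : (i : ℕ) ≠ (j : ℕ) + 1 := by
      have := Fin.lt_def.mp hij; omega
    simp [pararealBidiag, h1, h2]
  rw [Matrix.det_of_lowerTriangular _ h]
  simp [pararealBidiag]

lemma pararealBidiag_mul_key (N : ℕ) (RG RF : ℂ) :
    pararealBidiag N RG * (1 - pErr N RG RF) = pararealBidiag N RF := by
  ext i j
  rw [Matrix.mul_apply]
  rcases Fin.eq_zero_or_eq_succ i with hi | ⟨i', rfl⟩
  · subst hi
    have hrow : ∀ k : Fin (N + 1), pararealBidiag N RG 0 k =
        if k = 0 then (1 : ℂ) else 0 := by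
      intro k
      simp only [pararealBidiag, Matrix.of_apply]
      rcases eq_or_ne k 0 with rfl | hk
      · simp
      · have h1 : (0 : Fin (N + 1)) ≠ k := fun h => hk h.symm
        simp [h1, hk]
    simp only [hrow, ite_mul, one_mul, zero_mul, Finset.sum_ite_eq', Finset.mem_univ, if_true]
    simp [pErr, pararealBidiag, Matrix.sub_apply, Matrix.one_apply]
  · have hrow : ∀ k : Fin (N + 1), pararealBidiag N RG i'.succ k =
        (if k = i'.succ then (1 : ℂ) else 0) + (if k = i'.castSucc then -RG else 0) := by
      intro k
      simp only [pararealBidiag, Matrix.of_apply]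
      have h1 : (i'.succ = k) ↔ (k = i'.succ) := eq_comm
      by_cases hk1 : k = i'.succ
      · subst hk1
        have : i'.succ ≠ i'.castSucc := by
          simp [Fin.ext_iff]
        simp [this]
      · have h2 : i'.succ ≠ k := fun h => hk1 h.symm
        by_cases hk2 : k = i'.castSucc
        · subst hk2
          have : (i'.succ : ℕ) = (i'.castSucc : ℕ) + 1 := by simp
          simp [h2, hk1, this]
        · have h3 : (i' : ℕ) ≠ (k : ℕ) := fun h => hk2 (Fin.ext (by simpa using h.symm))
          simp [h2, hk1, hk2, h3]
    simp only [hrow, add_mul, ite_mul, one_mul, zero_mul, Finset.sum_add_distrib,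
      Finset.sum_ite_eq', Finset.mem_univ, if_true]
    simp only [Matrix.sub_apply, Matrix.one_apply, pErr, pararealBidiag, Matrix.of_apply,
      Fin.val_succ, Fin.coe_castSucc]
    have hsucc : (i'.succ = j) ↔ ((i' : ℕ) + 1 = (j : ℕ)) := by
      rw [Fin.ext_iff]; simp
    have hcast : (i'.castSucc = j) ↔ ((i' : ℕ) = (j : ℕ)) := by
      rw [Fin.ext_iff]; simp
    rcases Nat.lt_trichotomy (j : ℕ) (i' : ℕ) with hlt | heq | hgt
    · have e1 : (i' : ℕ) + 1 - (j : ℕ) - 1 = ((i' : ℕ) - (j : ℕ) - 1) + 1 := by omega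
      rw [if_neg (fun h => by rw [hsucc] at h; omega), if_pos (by omega : (j : ℕ) < (i' : ℕ) + 1),
        if_neg (fun h => by rw [hcast] at h; omega), if_pos hlt,
        if_neg (fun h => by rw [hsucc] at h; omega),
        if_neg (by omega : ¬ (i' : ℕ) + 1 = (j : ℕ) + 1), e1, pow_succ]
      ring
    · have e1 : (i' : ℕ) + 1 - (j : ℕ) - 1 = 0 := by omega
      rw [if_neg (fun h => by rw [hsucc] at h; omega), if_pos (by omega : (j : ℕ) < (i' : ℕ) + 1),
        if_pos (hcast.mpr heq.symm), if_neg (by omega : ¬ (j : ℕ) < (i' : ℕ)),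
        if_neg (fun h => by rw [hsucc] at h; omega),
        if_pos (by omega : (i' : ℕ) + 1 = (j : ℕ) + 1), e1, pow_zero]
      ring
    · by_cases hb1 : (j : ℕ) = (i' : ℕ) + 1
      · rw [if_pos (hsucc.mpr hb1.symm), if_neg (by omega), if_neg (fun h => by rw [hcast] at h; omega),
          if_neg (by omega), if_pos (hsucc.mpr hb1.symm)]
        ring
      · rw [if_neg (fun h => by rw [hsucc] at h; omega), if_neg (by omega),
          if_neg (fun h => by rw [hcast] at h; omega), if_neg (by omega),
          if_neg (fun h => by rw [hsucc] at h; omega), if_neg (by omega)]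
        ring

theorem parareal_convergence_region_scaling (Np Ng q : ℕ) (hNp : 1 ≤ Np) (hNg : 1 ≤ Ng)
    (hq : 1 ≤ q) (C₁ C₂ r₁ r₂ : ℝ) (hC₁ : 0 ≤ C₁) (hC₂ : 0 ≤ C₂) (hr₁ : 0 ≤ r₁)
    (hr₂ : 0 ≤ r₂) (θ : ℝ) (hθ : θ = (r₁ + r₂) / Ng)
    (RG RF : ℂ) (hRG : ‖RG‖ ≤ 1 + C₁ * θ ^ q)
    (hdiff : ‖RG - RF‖ ≤ C₂ * θ ^ q)
    (MG MF : Matrix (Fin (Np + 1)) (Fin (Np + 1)) ℂ)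
    (hMG : MG = pararealBidiag Np RG) (hMF : MF = pararealBidiag Np RF)
    (E : Matrix (Fin (Np + 1)) (Fin (Np + 1)) ℂ) (hE : E = 1 - MG⁻¹ * MF) :
    rowSumNorm E ≤ Np * C₂ * θ ^ q * (1 + C₁ * θ ^ q) ^ (Np - 1) ∧
    (Np * C₂ * θ ^ q * (1 + C₁ * θ ^ q) ^ (Np - 1) < 1 → rowSumNorm E < 1) := by
  have hdet : IsUnit MG.det := by rw [hMG, pararealBidiag_det]; exact isUnit_one
  have hkey : MG * (1 - pErr Np RG RF) = MF := by
    rw [hMG, hMF]; exact pararealBidiag_mul_key Np RG RF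
  have hinv : MG⁻¹ * MF = 1 - pErr Np RG RF := by
    rw [← hkey, ← Matrix.mul_assoc, Matrix.nonsing_inv_mul _ hdet, Matrix.one_mul]
  have hE' : E = pErr Np RG RF := by rw [hE, hinv, sub_sub_cancel]
  -- nonnegativity facts
  have hθ0 : 0 ≤ θ := by
    rw [hθ]; exact div_nonneg (by linarith) (Nat.cast_nonneg _)
  have hK0 : 0 ≤ C₂ * θ ^ q := mul_nonneg hC₂ (pow_nonneg hθ0 q)
  have hB1 : (1 : ℝ) ≤ 1 + C₁ * θ ^ q :=
    le_add_of_nonneg_right (mul_nonneg hC₁ (pow_nonneg hθ0 q))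
  have hB0 : (0 : ℝ) ≤ 1 + C₁ * θ ^ q := by linarith
  set K : ℝ := C₂ * θ ^ q * (1 + C₁ * θ ^ q) ^ (Np - 1) with hKdef
  have hKnn : 0 ≤ K := mul_nonneg hK0 (pow_nonneg hB0 _)
  have hbound : rowSumNorm E ≤ Np * C₂ * θ ^ q * (1 + C₁ * θ ^ q) ^ (Np - 1) := by
    rw [hE']
    apply Finset.sup'_le
    intro i _
    have hterm : ∀ j : Fin (Np + 1),
        ‖pErr Np RG RF i j‖ ≤ if (j : ℕ) < (i : ℕ) then K else 0 := by
      intro j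
      simp only [pErr, Matrix.of_apply]
      by_cases h : (j : ℕ) < (i : ℕ)
      · rw [if_pos h, if_pos h]
        rw [norm_mul, norm_neg, norm_pow]
        have hm : (i : ℕ) - (j : ℕ) - 1 ≤ Np - 1 := by
          have := i.is_le; omega
        calc ‖RG - RF‖ * ‖RG‖ ^ ((i : ℕ) - (j : ℕ) - 1)
            ≤ (C₂ * θ ^ q) * (1 + C₁ * θ ^ q) ^ ((i : ℕ) - (j : ℕ) - 1) := by
              apply mul_le_mul hdiff (pow_le_pow_left₀ (norm_nonneg _) hRG _)
                (pow_nonneg (norm_nonneg _) _) hK0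
          _ ≤ K := by
              rw [hKdef]
              exact mul_le_mul_of_nonneg_left (pow_le_pow_right₀ hB1 hm) hK0
      · rw [if_neg h, if_neg h, norm_zero]
    calc ∑ j, ‖pErr Np RG RF i j‖
        ≤ ∑ j : Fin (Np + 1), (if (j : ℕ) < (i : ℕ) then K else 0) :=
          Finset.sum_le_sum fun j _ => hterm j
      _ = (i : ℕ) * K := by
          rw [← Finset.sum_filter]
          have hfe : Finset.univ.filter (fun j : Fin (Np + 1) => (j : ℕ) < (i : ℕ)) =
              Finset.Iio i := by
            ext j
            simp only [Finset.mem_filter, Finset.mem_univ, true_and, Finset.mem_Iio, Fin.lt_def]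
          rw [hfe, Finset.sum_const, Fin.card_Iio, nsmul_eq_mul]
      _ ≤ Np * K := by
          apply mul_le_mul_of_nonneg_right _ hKnn
          exact_mod_cast i.is_le
      _ = Np * C₂ * θ ^ q * (1 + C₁ * θ ^ q) ^ (Np - 1) := by rw [hKdef]; ring
  exact ⟨hbound, fun h => lt_of_le_of_lt hbound h⟩
end
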